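/- arXiv:1604.06219 — 2 statements merged into one kernel-verified Lean document; each statement's English description precedes it below -/
import Mathlib

section
/- For an invariant control set C with nonempty interior, a point x belongs to the domain of attraction 𝒜(C) = {x : cl O⁺(x) ∩ C ≠ ∅} if and only if O⁺(x) ∩ int C ≠ ∅; consequently 𝒜(C) is open. -/
open MeasureTheory Set Topology

/-- A control-affine system `ẋ = f₀(x) + ∑ vᵢ(t) fᵢ(x)` on `ℝ^d` with Lipschitz
continuous vector fields and compact control range `V ⊆ ℝ^m`.  The (unique, global)
solutions are bundled as the data `φ` together with their defining properties. -/
structure CAS (d m : ℕ) where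
  /-- the drift vector field -/
  f0 : (Fin d → ℝ) → (Fin d → ℝ)
  /-- the control vector fields -/
  f : Fin m → (Fin d → ℝ) → (Fin d → ℝ)
  /-- the control range -/
  V : Set (Fin m → ℝ)
  lip0 : ∃ K, LipschitzWith K f0
  lip : ∀ i, ∃ K, LipschitzWith K (f i)
  V_compact : IsCompact V
  /-- the solution map: `φ x v t` is the solution at time `t` starting at `x` with control `v` -/
  φ : (Fin d → ℝ) → (ℝ → (Fin m → ℝ)) → ℝ → (Fin d → ℝ)
  φ_init : ∀ x v, φ x v 0 = x
  φ_cont : ∀ x v, Continuous (φ x v)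
  /-- solutions are (Carathéodory) solutions of the ODE -/
  φ_sol : ∀ (x : Fin d → ℝ) (v : ℝ → (Fin m → ℝ)), Measurable v → (∀ t, v t ∈ V) →
    ∀ t, 0 ≤ t →
      φ x v t = x + ∫ s in (0:ℝ)..t, (f0 (φ x v s) + ∑ i, v s i • f (i) (φ x v s))

namespace CAS

variable {d m : ℕ}

/-- the set of admissible controls -/
def ctrl (S : CAS d m) : Set (ℝ → (Fin m → ℝ)) :=
  {v | Measurable v ∧ ∀ t, v t ∈ S.V}

/-- a control is piecewise constant if it has only finitely many discontinuities on
every bounded interval, i.e. it is constant between the members of a sequence of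
switching times tending to infinity -/
def PiecewiseConst (v : ℝ → (Fin m → ℝ)) : Prop :=
  ∃ τ : ℕ → ℝ, τ 0 = 0 ∧ StrictMono τ ∧ Filter.Tendsto τ Filter.atTop Filter.atTop ∧
    ∀ n, ∀ t ∈ Ico (τ n) (τ (n + 1)), v t = v (τ n)

/-- the reachable set from `x` -/
def reach (S : CAS d m) (x : Fin d → ℝ) : Set (Fin d → ℝ) :=
  {y | ∃ v ∈ S.ctrl, ∃ t ≥ (0:ℝ), S.φ x v t = y}

/-- the set reachable from `x` with piecewise constant controls -/
def reachPC (S : CAS d m) (x : Fin d → ℝ) : Set (Fin d → ℝ) :=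
  {y | ∃ v ∈ S.ctrl, PiecewiseConst v ∧ ∃ t ≥ (0:ℝ), S.φ x v t = y}

/-- the reachable set from `x` up to time `T` -/
def reachLe (S : CAS d m) (T : ℝ) (x : Fin d → ℝ) : Set (Fin d → ℝ) :=
  {y | ∃ v ∈ S.ctrl, ∃ t ∈ Icc (0:ℝ) T, S.φ x v t = y}

/-- the controllable set to `x` up to time `T` -/
def contrLe (S : CAS d m) (T : ℝ) (x : Fin d → ℝ) : Set (Fin d → ℝ) :=
  {y | ∃ v ∈ S.ctrl, ∃ t ∈ Icc (0:ℝ) T, S.φ y v t = x}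

/-- positive invariance of a set -/
def posInv (S : CAS d m) (M : Set (Fin d → ℝ)) : Prop :=
  ∀ x ∈ M, ∀ v ∈ S.ctrl, ∀ t ≥ (0:ℝ), S.φ x v t ∈ M

/-- invariance of a set -/
def inv (S : CAS d m) (M : Set (Fin d → ℝ)) : Prop :=
  ∀ t ≥ (0:ℝ), {y | ∃ x ∈ M, ∃ v ∈ S.ctrl, S.φ x v t = y} = M

/-- the two defining properties (i) controlled invariance and (ii) approximate
reachability of a control set -/
def controlSetProps (S : CAS d m) (D : Set (Fin d → ℝ)) : Prop :=
  (∀ x ∈ D, ∃ v ∈ S.ctrl, ∀ t ≥ (0:ℝ), S.φ x v t ∈ D) ∧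
  (∀ x ∈ D, D ⊆ closure (S.reach x))

/-- a control set: a maximal nonempty set with the properties `controlSetProps` -/
def isControlSet (S : CAS d m) (D : Set (Fin d → ℝ)) : Prop :=
  D.Nonempty ∧ S.controlSetProps D ∧
  ∀ D', D ⊆ D' → S.controlSetProps D' → D' = D

/-- an invariant control set -/
def isInvControlSet (S : CAS d m) (C : Set (Fin d → ℝ)) : Prop :=
  S.isControlSet C ∧ ∀ x ∈ C, closure C = closure (S.reach x)

/-- local accessibility at a point -/
def locAccAt (S : CAS d m) (x : Fin d → ℝ) : Prop :=
  ∀ T > (0:ℝ), ∀ N ∈ 𝓝 x,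
    (interior (S.reachLe T x) ∩ N).Nonempty ∧ (interior (S.contrLe T x) ∩ N).Nonempty

/-- local accessibility on a set -/
def locAccOn (S : CAS d m) (M : Set (Fin d → ℝ)) : Prop :=
  ∀ x ∈ M, S.locAccAt x

/-- the domain of attraction of a set -/
def domAttr (S : CAS d m) (C : Set (Fin d → ℝ)) : Set (Fin d → ℝ) :=
  {x | (closure (S.reach x) ∩ C).Nonempty}

/-- the strict domain of attraction of an invariant control set -/
def domAttrStrict (S : CAS d m) (C : Set (Fin d → ℝ)) : Set (Fin d → ℝ) :=
  {x | (closure (S.reach x) ∩ C).Nonempty ∧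
    ∀ C', S.isInvControlSet C' → (closure (S.reach x) ∩ C').Nonempty → C' = C}

end CAS

namespace CAS

variable {d m : ℕ}

/-- The right-hand side field along a trajectory. -/
private def fld (S : CAS d m) (v : ℝ → (Fin m → ℝ)) (α : ℝ → (Fin d → ℝ)) (s : ℝ) :
    Fin d → ℝ :=
  S.f0 (α s) + ∑ i, v s i • S.f i (α s)

lemma fld_integrable (S : CAS d m) {v : ℝ → (Fin m → ℝ)} (hv : v ∈ S.ctrl)
    {α : ℝ → (Fin d → ℝ)} (hα : Continuous α) (a b : ℝ) :
    IntervalIntegrable (S.fld v α) MeasureTheory.volume a b := by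
  obtain ⟨M, hM⟩ := S.V_compact.isBounded.exists_norm_le
  have hf0c : Continuous S.f0 := S.lip0.choose_spec.continuous
  have hfc : ∀ i, Continuous (S.f i) := fun i => (S.lip i).choose_spec.continuous
  have hmeas : Measurable (S.fld v α) := by
    apply Measurable.add
    · exact (hf0c.comp hα).measurable
    · exact Finset.measurable_sum _ fun i _ =>
        ((measurable_pi_apply i).comp hv.1).smul ((hfc i).comp hα).measurable
  set B : ℝ → ℝ := fun s => ‖S.f0 (α s)‖ + max M 0 * ∑ i, ‖S.f i (α s)‖ with hB
  have hBc : Continuous B := by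
    apply ((hf0c.comp hα).norm.add (continuous_const.mul _))
    exact continuous_finset_sum _ fun i _ => ((hfc i).comp hα).norm
  obtain ⟨Cb, hCb⟩ := (isCompact_uIcc (a := a) (b := b)).exists_bound_of_continuousOn hBc.continuousOn
  rw [intervalIntegrable_iff]
  refine MeasureTheory.Integrable.mono' (g := fun _ => Cb)
    (MeasureTheory.integrableOn_const measure_Ioc_lt_top.ne)
    hmeas.aestronglyMeasurable ?_
  refine (MeasureTheory.ae_restrict_iff' measurableSet_uIoc).2
    (MeasureTheory.ae_of_all _ fun s hs => ?_)
  have hs' : s ∈ Set.uIcc a b := uIoc_subset_uIcc hs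
  have h1 : ‖S.fld v α s‖ ≤ B s := by
    refine (norm_add_le _ _).trans (add_le_add le_rfl ?_)
    refine (norm_sum_le _ _).trans ?_
    rw [Finset.mul_sum]
    refine Finset.sum_le_sum fun i _ => ?_
    rw [norm_smul]
    refine mul_le_mul_of_nonneg_right ?_ (norm_nonneg _)
    exact le_trans (le_trans (norm_le_pi_norm (v s) i) (hM _ (hv.2 s))) (le_max_left _ _)
  calc ‖S.fld v α s‖ ≤ B s := h1
    _ ≤ ‖B s‖ := le_abs_self _
    _ ≤ Cb := hCb s hs'

/-- Grönwall-type estimate: two solutions of the integral equation with the same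
control diverge at most exponentially. -/
lemma gronwall (S : CAS d m) {v : ℝ → (Fin m → ℝ)} (hv : v ∈ S.ctrl) :
    ∃ L : ℝ, 0 ≤ L ∧ ∀ (α β : ℝ → (Fin d → ℝ)), Continuous α → Continuous β → ∀ T : ℝ,
      (∀ t ∈ Icc (0:ℝ) T, α t = α 0 + ∫ s in (0:ℝ)..t, S.fld v α s) →
      (∀ t ∈ Icc (0:ℝ) T, β t = β 0 + ∫ s in (0:ℝ)..t, S.fld v β s) →
      ∀ t ∈ Icc (0:ℝ) T, ‖α t - β t‖ ≤ ‖α 0 - β 0‖ * Real.exp (L * t) := by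
  obtain ⟨K0, hK0⟩ := S.lip0
  have hKf : ∀ i, ∃ K, LipschitzWith K (S.f i) := S.lip
  choose Kf hKf using hKf
  obtain ⟨M, hM⟩ := S.V_compact.isBounded.exists_norm_le
  refine ⟨(K0 : ℝ) + (∑ i, (Kf i : ℝ)) * max M 0, by positivity, ?_⟩
  set L : ℝ := (K0 : ℝ) + (∑ i, (Kf i : ℝ)) * max M 0 with hL
  have hL0 : 0 ≤ L := by positivity
  have hfield : ∀ s p q, ‖(S.f0 p + ∑ i, v s i • S.f i p) -
      (S.f0 q + ∑ i, v s i • S.f i q)‖ ≤ L * ‖p - q‖ := by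
    intro s p q
    have h1 : (S.f0 p + ∑ i, v s i • S.f i p) - (S.f0 q + ∑ i, v s i • S.f i q)
        = (S.f0 p - S.f0 q) + ∑ i, v s i • (S.f i p - S.f i q) := by
      simp only [smul_sub, Finset.sum_sub_distrib]
      abel
    rw [h1]
    have h2 : ‖S.f0 p - S.f0 q‖ ≤ (K0 : ℝ) * ‖p - q‖ := by
      have := hK0.dist_le_mul p q
      rwa [dist_eq_norm, dist_eq_norm] at this
    have h3 : ‖∑ i, v s i • (S.f i p - S.f i q)‖
        ≤ (∑ i, (Kf i : ℝ)) * max M 0 * ‖p - q‖ := by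
      refine (norm_sum_le _ _).trans ?_
      rw [Finset.sum_mul, Finset.sum_mul]
      refine Finset.sum_le_sum fun i _ => ?_
      rw [norm_smul]
      have hvb : ‖v s i‖ ≤ max M 0 :=
        le_trans (le_trans (norm_le_pi_norm (v s) i) (hM _ (hv.2 s))) (le_max_left _ _)
      have hfi : ‖S.f i p - S.f i q‖ ≤ (Kf i : ℝ) * ‖p - q‖ := by
        have := (hKf i).dist_le_mul p q
        rwa [dist_eq_norm, dist_eq_norm] at this
      calc ‖v s i‖ * ‖S.f i p - S.f i q‖ ≤ max M 0 * ((Kf i : ℝ) * ‖p - q‖) := by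
            apply mul_le_mul hvb hfi (norm_nonneg _) (le_max_right _ _)
        _ = (Kf i : ℝ) * max M 0 * ‖p - q‖ := by ring
    calc ‖(S.f0 p - S.f0 q) + ∑ i, v s i • (S.f i p - S.f i q)‖
        ≤ ‖S.f0 p - S.f0 q‖ + ‖∑ i, v s i • (S.f i p - S.f i q)‖ := norm_add_le _ _
      _ ≤ (K0 : ℝ) * ‖p - q‖ + (∑ i, (Kf i : ℝ)) * max M 0 * ‖p - q‖ := add_le_add h2 h3
      _ = L * ‖p - q‖ := by rw [hL]; ring
  intro α β hα hβ T hαeq hβeq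
  have hIα := S.fld_integrable hv hα
  have hIβ := S.fld_integrable hv hβ
  set g : ℝ → ℝ := fun t => ‖α t - β t‖ with hgdef
  have hg : Continuous g := (hα.sub hβ).norm
  have hgW : ∀ t ∈ Icc (0:ℝ) T, g t ≤ g 0 + ∫ s in (0:ℝ)..t, L * g s := by
    intro t ht
    have e1 : α t - β t = (α 0 - β 0) + ∫ s in (0:ℝ)..t, (S.fld v α s - S.fld v β s) := by
      rw [hαeq t ht, hβeq t ht, intervalIntegral.integral_sub (hIα 0 t) (hIβ 0 t)]
      abel
    have e2 : ‖∫ s in (0:ℝ)..t, (S.fld v α s - S.fld v β s)‖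
        ≤ ∫ s in (0:ℝ)..t, L * g s := by
      refine (intervalIntegral.norm_integral_le_integral_norm ht.1).trans ?_
      refine intervalIntegral.integral_mono_on ht.1 ((hIα 0 t).sub (hIβ 0 t)).norm
        ((continuous_const.mul hg).intervalIntegrable 0 t) fun s _ => ?_
      exact hfield s (α s) (β s)
    calc g t = ‖(α 0 - β 0) + ∫ s in (0:ℝ)..t, (S.fld v α s - S.fld v β s)‖ := by
          rw [hgdef]; simp only; rw [e1]
      _ ≤ ‖α 0 - β 0‖ + ‖∫ s in (0:ℝ)..t, (S.fld v α s - S.fld v β s)‖ := norm_add_le _ _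
      _ ≤ g 0 + ∫ s in (0:ℝ)..t, L * g s := add_le_add le_rfl e2
  set W : ℝ → ℝ := fun t => g 0 + ∫ s in (0:ℝ)..t, L * g s with hWdef
  have hW' : ∀ x : ℝ, HasDerivAt W (L * g x) x := fun x =>
    (((continuous_const.mul hg).integral_hasStrictDerivAt 0 x).hasDerivAt).const_add _
  have hWcont : Continuous W :=
    continuous_iff_continuousAt.2 fun x => (hW' x).continuousAt
  have hW0 : W 0 = g 0 := by simp [hWdef]
  have hWmain : ∀ t ∈ Icc (0:ℝ) T, ‖W t‖ ≤ gronwallBound (g 0) L 0 (t - 0) := by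
    refine norm_le_gronwallBound_of_norm_deriv_right_le hWcont.continuousOn
      (fun x _ => (hW' x).hasDerivWithinAt) ?_ ?_
    · rw [hW0, Real.norm_of_nonneg (norm_nonneg _)]
    · intro x hx
      have hgx : g x ≤ W x := hgW x (Ico_subset_Icc_self hx)
      have hg0 : (0:ℝ) ≤ g x := norm_nonneg _
      have hWx : 0 ≤ W x := le_trans hg0 hgx
      rw [Real.norm_of_nonneg (mul_nonneg hL0 hg0), Real.norm_of_nonneg hWx]
      nlinarith
  intro t ht
  have h1 : g t ≤ ‖W t‖ := le_trans (hgW t ht) (le_abs_self _)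
  have h2 := hWmain t ht
  rw [gronwallBound_ε0, sub_zero] at h2
  exact le_trans h1 h2

/-- Uniqueness of solutions of the integral equation. -/
lemma uniq (S : CAS d m) {v : ℝ → (Fin m → ℝ)} (hv : v ∈ S.ctrl)
    {α β : ℝ → (Fin d → ℝ)} (hα : Continuous α) (hβ : Continuous β) {T : ℝ}
    (hαeq : ∀ t ∈ Icc (0:ℝ) T, α t = α 0 + ∫ s in (0:ℝ)..t, S.fld v α s)
    (hβeq : ∀ t ∈ Icc (0:ℝ) T, β t = β 0 + ∫ s in (0:ℝ)..t, S.fld v β s)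
    (h0 : α 0 = β 0) : ∀ t ∈ Icc (0:ℝ) T, α t = β t := by
  obtain ⟨L, hL0, hL⟩ := S.gronwall hv
  intro t ht
  have := hL α β hα hβ T hαeq hβeq t ht
  rw [h0, sub_self, norm_zero, zero_mul] at this
  have := le_antisymm this (norm_nonneg _)
  rwa [norm_eq_zero, sub_eq_zero] at this

/-- The solution map satisfies the integral equation in the `fld` form. -/
lemma sol' (S : CAS d m) {v : ℝ → (Fin m → ℝ)} (hv : v ∈ S.ctrl) (x : Fin d → ℝ) :
    ∀ t, 0 ≤ t → S.φ x v t = x + ∫ s in (0:ℝ)..t, S.fld v (S.φ x v) s :=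
  S.φ_sol x v hv.1 hv.2

/-- Concatenation: anything reachable from a reachable point is reachable. -/
lemma reach_trans (S : CAS d m) {x : Fin d → ℝ} {w : ℝ → (Fin m → ℝ)} (hw : w ∈ S.ctrl)
    {s : ℝ} (hs : 0 ≤ s) : S.reach (S.φ x w s) ⊆ S.reach x := by
  rintro z ⟨v, hv, t, ht, rfl⟩
  set y : Fin d → ℝ := S.φ x w s with hy
  set u : ℝ → (Fin m → ℝ) := fun r => if r < s then w r else v (r - s) with hu
  have hu_ctrl : u ∈ S.ctrl := by
    constructor
    · exact Measurable.ite measurableSet_Iio hw.1 (hv.1.comp (measurable_id.sub_const s))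
    · intro r
      by_cases h : r < s
      · simpa [hu, h] using hw.2 r
      · simpa [hu, h] using hv.2 (r - s)
  -- Step 1 : φ x u = φ x w on [0, s]
  have step1 : ∀ r ∈ Icc (0:ℝ) s, S.φ x u r = S.φ x w r := by
    have h_lt : ∀ r ∈ Ico (0:ℝ) s, S.φ x u r = S.φ x w r := by
      intro r hr
      have huw : ∀ σ, σ < s → S.fld u (S.φ x u) σ = S.fld w (S.φ x u) σ := by
        intro σ hlt
        simp [CAS.fld, hu, hlt]
      refine S.uniq hw (S.φ_cont x u) (S.φ_cont x w) (T := r) ?_ ?_ ?_ r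
        ⟨hr.1, le_refl r⟩
      · intro t' ht'
        have h1 := S.sol' hu_ctrl x t' ht'.1
        have h2 : (∫ σ in (0:ℝ)..t', S.fld u (S.φ x u) σ)
            = ∫ σ in (0:ℝ)..t', S.fld w (S.φ x u) σ := by
          refine intervalIntegral.integral_congr fun σ hσ => ?_
          rw [Set.uIcc_of_le ht'.1] at hσ
          exact huw σ (lt_of_le_of_lt (le_trans hσ.2 ht'.2) hr.2)
        rw [h1, h2, S.φ_init]
      · intro t' ht'
        rw [S.sol' hw x t' ht'.1, S.φ_init]
      · rw [S.φ_init, S.φ_init]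
    rcases eq_or_lt_of_le hs with h | h
    · intro r hr
      rw [← h] at hr
      have : r = 0 := le_antisymm hr.2 hr.1
      rw [this, S.φ_init, S.φ_init]
    · have hcl : Icc (0:ℝ) s = closure (Ico (0:ℝ) s) := (closure_Ico (ne_of_lt h)).symm
      intro r hr
      have hsub : Icc (0:ℝ) s ⊆ {r | S.φ x u r = S.φ x w r} := by
        rw [hcl]
        refine closure_minimal h_lt (isClosed_eq (S.φ_cont x u) (S.φ_cont x w))
      exact hsub hr
  have hus : S.φ x u s = y := step1 s ⟨hs, le_refl s⟩
  -- Step 2 : φ x u (s + r) = φ y v r on [0, t]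
  set A : ℝ → (Fin d → ℝ) := fun r => S.φ x u (s + r) with hA
  have hAc : Continuous A := (S.φ_cont x u).comp (continuous_const.add continuous_id)
  have hA0 : A 0 = y := by rw [hA]; simpa using hus
  have step2 : ∀ r ∈ Icc (0:ℝ) t, A r = S.φ y v r := by
    refine S.uniq hv hAc (S.φ_cont y v) (T := t) ?_ ?_ ?_
    · intro r hr
      have key : S.φ x u (s + r) = S.φ x u s + ∫ σ in (0:ℝ)..r, S.fld u (S.φ x u) (s + σ) := by
        have e1 := S.sol' hu_ctrl x (s + r) (by linarith [hr.1])
        have e2 := S.sol' hu_ctrl x s hs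
        have esplit : (∫ σ in (0:ℝ)..(s + r), S.fld u (S.φ x u) σ)
            = (∫ σ in (0:ℝ)..s, S.fld u (S.φ x u) σ)
              + ∫ σ in s..(s + r), S.fld u (S.φ x u) σ :=
          (intervalIntegral.integral_add_adjacent_intervals
            (S.fld_integrable hu_ctrl (S.φ_cont x u) 0 s)
            (S.fld_integrable hu_ctrl (S.φ_cont x u) s (s + r))).symm
        have eshift : (∫ σ in (0:ℝ)..r, S.fld u (S.φ x u) (s + σ))
            = ∫ σ in s..(s + r), S.fld u (S.φ x u) σ := by
          have := intervalIntegral.integral_comp_add_left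
            (a := (0:ℝ)) (b := r) (f := S.fld u (S.φ x u)) s
          simp only [add_zero] at this
          exact this
        rw [e1, e2, esplit, eshift, add_assoc]
      have econg : (∫ σ in (0:ℝ)..r, S.fld u (S.φ x u) (s + σ))
          = ∫ σ in (0:ℝ)..r, S.fld v A σ := by
        refine intervalIntegral.integral_congr fun σ hσ => ?_
        rw [Set.uIcc_of_le hr.1] at hσ
        have h1 : ¬ (s + σ < s) := not_lt.2 (le_add_of_nonneg_right hσ.1)
        simp [CAS.fld, hA, hu, h1]
      calc A r = S.φ x u (s + r) := rfl
        _ = S.φ x u s + ∫ σ in (0:ℝ)..r, S.fld v A σ := by rw [key, econg]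
        _ = A 0 + ∫ σ in (0:ℝ)..r, S.fld v A σ := by
            congr 1
            rw [hA]; simp
    · intro r hr
      rw [S.sol' hv y r hr.1, S.φ_init]
    · rw [hA0, S.φ_init]
  have : S.φ x u (s + t) = S.φ y v t := step2 t ⟨ht, le_refl t⟩
  exact ⟨u, hu_ctrl, s + t, by linarith, this⟩

/-- Continuity of the solution map in the initial condition. -/
lemma phi_cont_ic (S : CAS d m) {v : ℝ → (Fin m → ℝ)} (hv : v ∈ S.ctrl) {t : ℝ}
    (ht : 0 ≤ t) : Continuous fun x => S.φ x v t := by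
  obtain ⟨L, hL0, hL⟩ := S.gronwall hv
  have lip : LipschitzWith (Real.toNNReal (Real.exp (L * t))) (fun x => S.φ x v t) := by
    rw [lipschitzWith_iff_dist_le_mul]
    intro x x'
    have := hL (S.φ x v) (S.φ x' v) (S.φ_cont x v) (S.φ_cont x' v) t
      (fun r hr => by rw [S.sol' hv x r hr.1, S.φ_init])
      (fun r hr => by rw [S.sol' hv x' r hr.1, S.φ_init])
      t ⟨ht, le_refl t⟩
    rw [S.φ_init, S.φ_init] at this
    rw [dist_eq_norm, dist_eq_norm]
    rw [Real.coe_toNNReal _ (Real.exp_nonneg _)]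
    calc ‖S.φ x v t - S.φ x' v t‖ ≤ ‖x - x'‖ * Real.exp (L * t) := this
      _ = Real.exp (L * t) * ‖x - x'‖ := by ring
  exact lip.continuous

end CAS

/-- For an invariant control set `C` with nonempty interior, a
point `x` belongs to the domain of attraction `𝒜(C)` iff `𝒪⁺(x) ∩ int C ≠ ∅`;
consequently `𝒜(C)` is open. -/
theorem stmt13 {d m : ℕ} (S : CAS d m) (C : Set (Fin d → ℝ))
    (hC : S.isInvControlSet C) (hint : (interior C).Nonempty) :
    (∀ x, x ∈ S.domAttr C ↔ (S.reach x ∩ interior C).Nonempty) ∧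
    IsOpen (S.domAttr C) := by
  constructor
  · intro x
    constructor
    · rintro ⟨y, hycl, hyC⟩
      -- closure C = closure (reach y), so int C meets reach y
      have hclC : closure C = closure (S.reach y) := hC.2 y hyC
      obtain ⟨p, hp⟩ := hint
      have hpcl : p ∈ closure (S.reach y) := by
        rw [← hclC]; exact subset_closure (interior_subset hp)
      obtain ⟨z, hzint, hzreach⟩ :=
        mem_closure_iff.1 hpcl (interior C) isOpen_interior hp
      obtain ⟨v, hv, t, ht, rfl⟩ := hzreach
      -- the map q ↦ φ q v t is continuous
      have hcont := S.phi_cont_ic hv ht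
      have hopen : IsOpen ((fun q => S.φ q v t) ⁻¹' interior C) :=
        isOpen_interior.preimage hcont
      have hymem : y ∈ (fun q => S.φ q v t) ⁻¹' interior C := hzint
      obtain ⟨y', hy'pre, hy'reach⟩ :=
        mem_closure_iff.1 hycl _ hopen hymem
      obtain ⟨w, hw, s, hs, rfl⟩ := hy'reach
      refine ⟨S.φ (S.φ x w s) v t, ?_, hy'pre⟩
      exact S.reach_trans hw hs ⟨v, hv, t, ht, rfl⟩
    · rintro ⟨z, hzreach, hzint⟩
      exact ⟨z, subset_closure hzreach, interior_subset hzint⟩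
  · rw [isOpen_iff_forall_mem_open]
    intro x hx
    have hx' : (S.reach x ∩ interior C).Nonempty := by
      rcases hx with ⟨y, hycl, hyC⟩
      have hclC : closure C = closure (S.reach y) := hC.2 y hyC
      obtain ⟨p, hp⟩ := hint
      have hpcl : p ∈ closure (S.reach y) := by
        rw [← hclC]; exact subset_closure (interior_subset hp)
      obtain ⟨z, hzint, hzreach⟩ :=
        mem_closure_iff.1 hpcl (interior C) isOpen_interior hp
      obtain ⟨v, hv, t, ht, rfl⟩ := hzreach
      have hcont := S.phi_cont_ic hv ht
      have hopen : IsOpen ((fun q => S.φ q v t) ⁻¹' interior C) :=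
        isOpen_interior.preimage hcont
      have hymem : y ∈ (fun q => S.φ q v t) ⁻¹' interior C := hzint
      obtain ⟨y', hy'pre, hy'reach⟩ :=
        mem_closure_iff.1 hycl _ hopen hymem
      obtain ⟨w, hw, s, hs, rfl⟩ := hy'reach
      exact ⟨S.φ (S.φ x w s) v t, S.reach_trans hw hs ⟨v, hv, t, ht, rfl⟩, hy'pre⟩
    obtain ⟨z, hzreach, hzint⟩ := hx'
    obtain ⟨v, hv, t, ht, rfl⟩ := hzreach
    have hcont := S.phi_cont_ic hv ht
    refine ⟨(fun q => S.φ q v t) ⁻¹' interior C, ?_, isOpen_interior.preimage hcont, hzint⟩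
    intro q hq
    exact ⟨S.φ q v t, subset_closure ⟨v, hv, t, ht, rfl⟩, interior_subset hq⟩
end

section
/- If M is a compact, connected, positively invariant, locally accessible set containing at least two invariant control sets, then for every invariant control set C_k ⊂ M the set [𝒜(C_k) ∩ M] \ 𝒜_strict(C_k) is nonempty; hence for every invariant control set C_k there is another invariant control set C_i ≠ C_k with 𝒜(C_k) ∩ 𝒜(C_i) ≠ ∅. -/
open MeasureTheory Set Topology

namespace CAS

variable {d m : ℕ}

/-- the integrand of the ODE -/
noncomputable def GG (S : CAS d m) (v : ℝ → (Fin m → ℝ)) (z : ℝ → (Fin d → ℝ)) (s : ℝ) :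
    Fin d → ℝ :=
  S.f0 (z s) + ∑ i, v s i • S.f i (z s)

lemma φ_sol' (S : CAS d m) (x : Fin d → ℝ) {v} (hv : v ∈ S.ctrl) {t : ℝ} (ht : 0 ≤ t) :
    S.φ x v t = x + ∫ s in (0:ℝ)..t, S.GG v (S.φ x v) s :=
  S.φ_sol x v hv.1 hv.2 t ht

/-- a bound for the control range -/
noncomputable def BB (S : CAS d m) : ℝ :=
  max 0 (Classical.choose (isBounded_iff_forall_norm_le.mp S.V_compact.isBounded))

lemma BB_nonneg (S : CAS d m) : 0 ≤ S.BB := le_max_left _ _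

lemma norm_le_BB (S : CAS d m) {w : Fin m → ℝ} (hw : w ∈ S.V) : ‖w‖ ≤ S.BB :=
  le_trans (Classical.choose_spec (isBounded_iff_forall_norm_le.mp S.V_compact.isBounded) w hw)
    (le_max_right _ _)

lemma abs_le_BB (S : CAS d m) {w : Fin m → ℝ} (hw : w ∈ S.V) (i : Fin m) : |w i| ≤ S.BB :=
  le_trans (by simpa using norm_le_pi_norm w i) (S.norm_le_BB hw)

/-- the Lipschitz constant -/
noncomputable def K0r (S : CAS d m) : ℝ := ((Classical.choose S.lip0 : NNReal) : ℝ)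

noncomputable def Kir (S : CAS d m) (i : Fin m) : ℝ := ((Classical.choose (S.lip i) : NNReal) : ℝ)

lemma K0r_nonneg (S : CAS d m) : 0 ≤ S.K0r := NNReal.coe_nonneg _

lemma Kir_nonneg (S : CAS d m) (i : Fin m) : 0 ≤ S.Kir i := NNReal.coe_nonneg _

noncomputable def LL (S : CAS d m) : ℝ :=
  S.K0r + S.BB * ∑ i, S.Kir i + 1

lemma one_le_LL (S : CAS d m) : 1 ≤ S.LL := by
  have h1 : (0:ℝ) ≤ S.K0r := S.K0r_nonneg
  have h2 : (0:ℝ) ≤ S.BB * ∑ i, S.Kir i :=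
    mul_nonneg S.BB_nonneg (Finset.sum_nonneg fun i _ => S.Kir_nonneg i)
  unfold LL; linarith

lemma LL_pos (S : CAS d m) : 0 < S.LL := lt_of_lt_of_le one_pos S.one_le_LL

lemma diff_bound (S : CAS d m) {w : Fin m → ℝ} (hw : w ∈ S.V) (a b : Fin d → ℝ) :
    ‖(S.f0 a + ∑ i, w i • S.f i a) - (S.f0 b + ∑ i, w i • S.f i b)‖ ≤ S.LL * ‖a - b‖ := by
  have hK0 := Classical.choose_spec S.lip0
  have hrw : (S.f0 a + ∑ i, w i • S.f i a) - (S.f0 b + ∑ i, w i • S.f i b)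
      = (S.f0 a - S.f0 b) + ∑ i, w i • (S.f i a - S.f i b) := by
    rw [Finset.sum_congr rfl (fun i _ => smul_sub (w i) (S.f i a) (S.f i b)),
      Finset.sum_sub_distrib]
    abel
  rw [hrw]
  have h0 : ‖S.f0 a - S.f0 b‖ ≤ S.K0r * ‖a - b‖ := by
    have := hK0.dist_le_mul a b
    simpa [dist_eq_norm, K0r] using this
  have hi : ∀ i : Fin m, ‖w i • (S.f i a - S.f i b)‖
      ≤ S.BB * (S.Kir i * ‖a - b‖) := by
    intro i
    rw [norm_smul, Real.norm_eq_abs]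
    have h1 := S.abs_le_BB hw i
    have h2 : ‖S.f i a - S.f i b‖ ≤ S.Kir i * ‖a - b‖ := by
      have := (Classical.choose_spec (S.lip i)).dist_le_mul a b
      simpa [dist_eq_norm, Kir] using this
    exact mul_le_mul h1 h2 (norm_nonneg _) S.BB_nonneg
  calc ‖(S.f0 a - S.f0 b) + ∑ i, w i • (S.f i a - S.f i b)‖
      ≤ ‖S.f0 a - S.f0 b‖ + ‖∑ i, w i • (S.f i a - S.f i b)‖ := norm_add_le _ _
    _ ≤ S.K0r * ‖a - b‖ + ∑ i, S.BB * (S.Kir i * ‖a - b‖) := by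
        refine add_le_add h0 (le_trans (norm_sum_le _ _) (Finset.sum_le_sum fun i _ => hi i))
    _ = (S.K0r + S.BB * ∑ i, S.Kir i) * ‖a - b‖ := by
        rw [Finset.mul_sum, add_mul, Finset.sum_mul]
        congr 1
        exact Finset.sum_congr rfl fun i _ => by ring
    _ ≤ S.LL * ‖a - b‖ := by
        have : S.K0r + S.BB * ∑ i, S.Kir i ≤ S.LL := by unfold LL; linarith
        exact mul_le_mul_of_nonneg_right this (norm_nonneg _)

lemma GG_diff_bound (S : CAS d m) {v : ℝ → Fin m → ℝ} (hv : ∀ t, v t ∈ S.V)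
    (a b : ℝ → Fin d → ℝ) (s : ℝ) :
    ‖S.GG v a s - S.GG v b s‖ ≤ S.LL * ‖a s - b s‖ :=
  S.diff_bound (hv s) (a s) (b s)

lemma GG_meas (S : CAS d m) {v : ℝ → Fin m → ℝ} (hv : Measurable v)
    {z : ℝ → Fin d → ℝ} (hz : Continuous z) : Measurable (S.GG v z) := by
  have hf0 : Continuous S.f0 := (Classical.choose_spec S.lip0).continuous
  have hfi : ∀ i, Continuous (S.f i) := fun i => (Classical.choose_spec (S.lip i)).continuous
  unfold GG
  apply Measurable.add
  · exact (hf0.comp hz).measurable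
  · exact Finset.measurable_sum _ fun i _ =>
      ((measurable_pi_apply i).comp hv).smul ((hfi i).comp hz).measurable

lemma GG_int (S : CAS d m) {v : ℝ → Fin m → ℝ} (hv : v ∈ S.ctrl)
    {z : ℝ → Fin d → ℝ} (hz : Continuous z) {T : ℝ} (hT : 0 ≤ T) :
    IntervalIntegrable (S.GG v z) MeasureTheory.volume 0 T := by
  have hf0 : Continuous S.f0 := (Classical.choose_spec S.lip0).continuous
  have hfi : ∀ i, Continuous (S.f i) := fun i => (Classical.choose_spec (S.lip i)).continuous
  rw [intervalIntegrable_iff_integrableOn_Ioc_of_le hT]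
  have hcont : Continuous fun s => ‖S.f0 (z s)‖ + S.BB * ∑ i, ‖S.f i (z s)‖ := by
    apply Continuous.add ((hf0.comp hz).norm)
    exact continuous_const.mul (continuous_finset_sum _ fun i _ => ((hfi i).comp hz).norm)
  obtain ⟨Cb, hCb⟩ := (isCompact_Icc (a := (0:ℝ)) (b := T)).exists_bound_of_continuousOn
    hcont.continuousOn
  apply MeasureTheory.Measure.integrableOn_of_bounded (M := Cb)
    (measure_Ioc_lt_top).ne ((S.GG_meas hv.1 hz).aestronglyMeasurable)
  filter_upwards [MeasureTheory.ae_restrict_mem measurableSet_Ioc] with s hs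
  have hsIcc : s ∈ Icc (0:ℝ) T := Ioc_subset_Icc_self hs
  have hb : ‖S.GG v z s‖ ≤ ‖S.f0 (z s)‖ + S.BB * ∑ i, ‖S.f i (z s)‖ := by
    unfold GG
    refine le_trans (norm_add_le _ _) (add_le_add le_rfl ?_)
    refine le_trans (norm_sum_le _ _) ?_
    rw [Finset.mul_sum]
    refine Finset.sum_le_sum fun i _ => ?_
    rw [norm_smul, Real.norm_eq_abs]
    exact mul_le_mul_of_nonneg_right (S.abs_le_BB (hv.2 s) i) (norm_nonneg _)
  exact le_trans hb (le_trans (le_abs_self _) (hCb s hsIcc))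



lemma key (S : CAS d m) {v w : ℝ → Fin m → ℝ} (hv : v ∈ S.ctrl) (hw : w ∈ S.ctrl)
    {a b : ℝ → Fin d → ℝ} (ha : Continuous a) (hb : Continuous b) {T : ℝ} (hT : 0 ≤ T)
    (hae : ∀ t ∈ Icc (0:ℝ) T, a t = a 0 + ∫ s in (0:ℝ)..t, S.GG v a s)
    (hbe : ∀ t ∈ Icc (0:ℝ) T, b t = b 0 + ∫ s in (0:ℝ)..t, S.GG w b s)
    (hvw : ∀ᵐ s ∂(MeasureTheory.volume.restrict (Icc (0:ℝ) T)), v s = w s) :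
    ∀ t ∈ Icc (0:ℝ) T, ‖a t - b t‖ ≤ ‖a 0 - b 0‖ * Real.exp (S.LL * t) := by
  set g : ℝ → ℝ := fun t => ‖a t - b t‖ with hg_def
  have hg_cont : Continuous g := (ha.sub hb).norm
  have hg_nonneg : ∀ t, 0 ≤ g t := fun t => norm_nonneg _
  set δ : ℝ := ‖a 0 - b 0‖ with hδ_def
  have hδ_nonneg : 0 ≤ δ := norm_nonneg _
  -- step 1 : the integral inequality
  have step1 : ∀ t ∈ Icc (0:ℝ) T, g t ≤ δ + S.LL * ∫ s in (0:ℝ)..t, g s := by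
    intro t ht
    have hIa : IntervalIntegrable (S.GG v a) MeasureTheory.volume 0 t := S.GG_int hv ha ht.1
    have hIb : IntervalIntegrable (S.GG w b) MeasureTheory.volume 0 t := S.GG_int hw hb ht.1
    have heq : a t - b t = (a 0 - b 0) + ∫ s in (0:ℝ)..t, (S.GG v a s - S.GG w b s) := by
      rw [intervalIntegral.integral_sub hIa hIb, hae t ht, hbe t ht]
      abel
    have hnorm1 : ‖∫ s in (0:ℝ)..t, (S.GG v a s - S.GG w b s)‖
        ≤ ∫ s in (0:ℝ)..t, ‖S.GG v a s - S.GG w b s‖ :=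
      intervalIntegral.norm_integral_le_integral_norm ht.1
    have hvw_t : ∀ᵐ s ∂(MeasureTheory.volume.restrict (Icc (0:ℝ) t)), v s = w s :=
      MeasureTheory.ae_restrict_of_ae_restrict_of_subset (Icc_subset_Icc_right ht.2) hvw
    have hmono : (∫ s in (0:ℝ)..t, ‖S.GG v a s - S.GG w b s‖)
        ≤ ∫ s in (0:ℝ)..t, S.LL * g s := by
      apply intervalIntegral.integral_mono_ae_restrict ht.1 (hIa.sub hIb).norm
        ((continuous_const.mul hg_cont).intervalIntegrable _ _)
      filter_upwards [hvw_t] with s hs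
      have : S.GG w b s = S.GG v b s := by simp only [CAS.GG, hs]
      rw [this]
      exact S.GG_diff_bound hv.2 a b s
    have hint_eq : (∫ s in (0:ℝ)..t, S.LL * g s) = S.LL * ∫ s in (0:ℝ)..t, g s :=
      intervalIntegral.integral_const_mul _ _
    calc g t = ‖(a 0 - b 0) + ∫ s in (0:ℝ)..t, (S.GG v a s - S.GG w b s)‖ := by
          show ‖a t - b t‖ = _
          rw [heq]
      _ ≤ δ + ‖∫ s in (0:ℝ)..t, (S.GG v a s - S.GG w b s)‖ := norm_add_le _ _
      _ ≤ δ + ∫ s in (0:ℝ)..t, ‖S.GG v a s - S.GG w b s‖ := by linarith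
      _ ≤ δ + ∫ s in (0:ℝ)..t, S.LL * g s := by linarith
      _ = δ + S.LL * ∫ s in (0:ℝ)..t, g s := by rw [hint_eq]
  -- step 2 : Gronwall
  set h : ℝ → ℝ := fun t => ∫ s in (0:ℝ)..t, g s with hh_def
  have hh_nonneg : ∀ t ∈ Icc (0:ℝ) T, 0 ≤ h t := fun t ht =>
    intervalIntegral.integral_nonneg ht.1 fun s _ => hg_nonneg s
  have hh_deriv : ∀ t ∈ Ico (0:ℝ) T, HasDerivWithinAt h (g t) (Ici t) t := fun t _ =>
    ((hg_cont.integral_hasStrictDerivAt 0 t).hasDerivAt).hasDerivWithinAt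
  have hh_cont : Continuous h := by
    rw [continuous_iff_continuousAt]
    exact fun t => ((hg_cont.integral_hasStrictDerivAt 0 t).hasDerivAt).continuousAt
  have hbound : ∀ t ∈ Ico (0:ℝ) T, ‖g t‖ ≤ S.LL * ‖h t‖ + δ := by
    intro t ht
    have h1 := step1 t (Ico_subset_Icc_self ht)
    rw [Real.norm_of_nonneg (hg_nonneg t),
      Real.norm_of_nonneg (hh_nonneg t (Ico_subset_Icc_self ht))]
    linarith
  have hgron := norm_le_gronwallBound_of_norm_deriv_right_le (f := h) (f' := g)
    (δ := 0) (K := S.LL) (ε := δ) (a := 0) (b := T)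
    hh_cont.continuousOn hh_deriv (by simp [hh_def]) hbound
  intro t ht
  have h2 := hgron t ht
  rw [Real.norm_of_nonneg (hh_nonneg t ht), sub_zero] at h2
  have h3 : gronwallBound 0 S.LL δ t = δ / S.LL * (Real.exp (S.LL * t) - 1) := by
    rw [gronwallBound_of_K_ne_0 (ne_of_gt S.LL_pos)]
    simp
  rw [h3] at h2
  have h4 := step1 t ht
  have h5 : S.LL * h t ≤ S.LL * (δ / S.LL * (Real.exp (S.LL * t) - 1)) :=
    mul_le_mul_of_nonneg_left h2 (le_of_lt S.LL_pos)
  have h6 : S.LL * (δ / S.LL * (Real.exp (S.LL * t) - 1)) = δ * (Real.exp (S.LL * t) - 1) := by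
    field_simp
    rw [mul_assoc]
    exact mul_div_cancel_left₀ _ (ne_of_gt S.LL_pos)
  have h7 : δ + δ * (Real.exp (S.LL * t) - 1) = δ * Real.exp (S.LL * t) := by ring
  linarith

lemma contdep (S : CAS d m) {v : ℝ → Fin m → ℝ} (hv : v ∈ S.ctrl) (x y : Fin d → ℝ)
    {t : ℝ} (ht : 0 ≤ t) :
    ‖S.φ x v t - S.φ y v t‖ ≤ ‖x - y‖ * Real.exp (S.LL * t) := by
  have h := S.key hv hv (S.φ_cont x v) (S.φ_cont y v) ht
    (fun t' ht' => by rw [S.φ_init x v]; exact S.φ_sol' x hv ht'.1)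
    (fun t' ht' => by rw [S.φ_init y v]; exact S.φ_sol' y hv ht'.1)
    (Filter.Eventually.of_forall fun _ => rfl) t ⟨ht, le_refl t⟩
  rwa [S.φ_init x v, S.φ_init y v] at h

lemma uniq_s14 (S : CAS d m) {v w : ℝ → Fin m → ℝ} (hv : v ∈ S.ctrl) (hw : w ∈ S.ctrl)
    (x : Fin d → ℝ) {T : ℝ} (hT : 0 ≤ T)
    (hvw : ∀ᵐ s ∂(MeasureTheory.volume.restrict (Icc (0:ℝ) T)), v s = w s) :
    ∀ t ∈ Icc (0:ℝ) T, S.φ x v t = S.φ x w t := by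
  intro t ht
  have h := S.key hv hw (S.φ_cont x v) (S.φ_cont x w) hT
    (fun t' ht' => by rw [S.φ_init x v]; exact S.φ_sol' x hv ht'.1)
    (fun t' ht' => by rw [S.φ_init x w]; exact S.φ_sol' x hw ht'.1)
    hvw t ht
  rw [S.φ_init x v, S.φ_init x w, sub_self, norm_zero, zero_mul] at h
  have := le_antisymm h (norm_nonneg _)
  rwa [norm_sub_eq_zero_iff] at this

lemma concat (S : CAS d m) {u w : ℝ → Fin m → ℝ} (hu : u ∈ S.ctrl) (hw : w ∈ S.ctrl)
    (x : Fin d → ℝ) {t₁ t₂ : ℝ} (ht₁ : 0 ≤ t₁) (ht₂ : 0 ≤ t₂) :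
    ∃ vv ∈ S.ctrl, S.φ x vv (t₁ + t₂) = S.φ (S.φ x u t₁) w t₂ := by
  classical
  set vv : ℝ → Fin m → ℝ := fun s => if s < t₁ then u s else w (s - t₁) with hvv_def
  have hvv : vv ∈ S.ctrl := by
    constructor
    · exact Measurable.ite measurableSet_Iio hu.1 (hw.1.comp (measurable_id.sub measurable_const))
    · intro s
      by_cases hs : s < t₁ <;> simp only [hvv_def, hs, if_true, if_false]
      exacts [hu.2 s, hw.2 (s - t₁)]
  refine ⟨vv, hvv, ?_⟩
  -- step A : φ x vv = φ x u on [0, t₁]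
  have hA : ∀ t ∈ Icc (0:ℝ) t₁, S.φ x vv t = S.φ x u t := by
    apply S.uniq_s14 hvv hu x ht₁
    have h0 : ∀ᵐ (s : ℝ) ∂MeasureTheory.volume, s ≠ t₁ := by
      rw [MeasureTheory.ae_iff]
      simp only [ne_eq, not_not, Set.setOf_eq_eq_singleton]
      exact Real.volume_singleton
    have h0' : ∀ᵐ (s : ℝ) ∂(MeasureTheory.volume.restrict (Icc (0:ℝ) t₁)), s ≠ t₁ :=
      h0.filter_mono (MeasureTheory.ae_mono MeasureTheory.Measure.restrict_le_self)
    filter_upwards [h0', MeasureTheory.ae_restrict_mem measurableSet_Icc] with s hne hs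
    have : s < t₁ := lt_of_le_of_ne hs.2 hne
    simp only [hvv_def, this, if_true]
  have hy : S.φ x vv t₁ = S.φ x u t₁ := hA t₁ ⟨ht₁, le_refl _⟩
  -- step B : compare the shifted trajectory with φ y w on [0, t₂]
  set y := S.φ x u t₁ with hy_def
  set a' : ℝ → Fin d → ℝ := fun s => S.φ x vv (t₁ + s) with ha'_def
  set v' : ℝ → Fin m → ℝ := fun s => vv (t₁ + s) with hv'_def
  have hv' : v' ∈ S.ctrl :=
    ⟨hvv.1.comp (measurable_const.add measurable_id), fun s => hvv.2 (t₁ + s)⟩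
  have hv'w : ∀ s, 0 ≤ s → v' s = w s := by
    intro s hs
    have h1 : ¬ (t₁ + s < t₁) := not_lt.2 (le_add_of_nonneg_right hs)
    simp only [hv'_def, hvv_def, h1, if_false, add_sub_cancel_left]
  have ha'_cont : Continuous a' := (S.φ_cont x vv).comp (continuous_const.add continuous_id)
  have ha'0 : a' 0 = y := by
    simp only [ha'_def, add_zero]
    rw [hy, hy_def]
  have hae : ∀ t ∈ Icc (0:ℝ) t₂, a' t = a' 0 + ∫ s in (0:ℝ)..t, S.GG v' a' s := by
    intro t ht
    have hI1 : IntervalIntegrable (S.GG vv (S.φ x vv)) MeasureTheory.volume 0 (t₁ + t) :=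
      S.GG_int hvv (S.φ_cont x vv) (by linarith [ht.1])
    have hI2 : IntervalIntegrable (S.GG vv (S.φ x vv)) MeasureTheory.volume 0 t₁ :=
      S.GG_int hvv (S.φ_cont x vv) ht₁
    have h1 : a' t = x + ∫ s in (0:ℝ)..(t₁ + t), S.GG vv (S.φ x vv) s :=
      S.φ_sol' x hvv (by linarith [ht.1])
    have h2 : a' 0 = x + ∫ s in (0:ℝ)..t₁, S.GG vv (S.φ x vv) s := by
      have := S.φ_sol' x hvv ht₁
      simp only [ha'_def, add_zero]
      exact this
    have h3 : (∫ s in (0:ℝ)..(t₁ + t), S.GG vv (S.φ x vv) s)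
        - ∫ s in (0:ℝ)..t₁, S.GG vv (S.φ x vv) s
        = ∫ s in t₁..(t₁ + t), S.GG vv (S.φ x vv) s :=
      intervalIntegral.integral_interval_sub_left hI1 hI2
    have h4 : (∫ s in (0:ℝ)..t, S.GG vv (S.φ x vv) (t₁ + s))
        = ∫ s in t₁..(t₁ + t), S.GG vv (S.φ x vv) s := by
      rw [intervalIntegral.integral_comp_add_left (fun s => S.GG vv (S.φ x vv) s) t₁, add_zero]
    have h5 : (∫ s in (0:ℝ)..t, S.GG v' a' s)
        = ∫ s in (0:ℝ)..t, S.GG vv (S.φ x vv) (t₁ + s) := rfl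
    rw [h1, h2, h5, h4, ← h3]
    abel
  have hbe : ∀ t ∈ Icc (0:ℝ) t₂, S.φ y w t = S.φ y w 0 + ∫ s in (0:ℝ)..t, S.GG w (S.φ y w) s :=
    fun t ht => by rw [S.φ_init y w]; exact S.φ_sol' y hw ht.1
  have hae' : ∀ t ∈ Icc (0:ℝ) t₂, a' t = a' 0 + ∫ s in (0:ℝ)..t, S.GG v' a' s := hae
  have hvw' : ∀ᵐ s ∂(MeasureTheory.volume.restrict (Icc (0:ℝ) t₂)), v' s = w s := by
    filter_upwards [MeasureTheory.ae_restrict_mem measurableSet_Icc] with s hs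
    exact hv'w s hs.1
  have hk := S.key hv' hw ha'_cont (S.φ_cont y w) ht₂ hae' hbe hvw' t₂ ⟨ht₂, le_refl _⟩
  rw [ha'0, S.φ_init y w, sub_self, norm_zero, zero_mul] at hk
  have := le_antisymm hk (norm_nonneg _)
  rw [norm_sub_eq_zero_iff] at this
  exact this

lemma reachLe_subset_reach (S : CAS d m) (T : ℝ) (x : Fin d → ℝ) :
    S.reachLe T x ⊆ S.reach x := by
  rintro z ⟨v, hv, t, ht, rfl⟩
  exact ⟨v, hv, t, ht.1, rfl⟩

lemma mem_reach_self (S : CAS d m) (hc : S.ctrl.Nonempty) (x : Fin d → ℝ) : x ∈ S.reach x := by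
  obtain ⟨v₀, hv₀⟩ := hc
  exact ⟨v₀, hv₀, 0, le_refl 0, S.φ_init x v₀⟩

lemma reach_mono (S : CAS d m) {x y : Fin d → ℝ} (hy : y ∈ S.reach x) :
    S.reach y ⊆ S.reach x := by
  rintro z ⟨w, hw, t₂, ht₂, rfl⟩
  obtain ⟨u, hu, t₁, ht₁, rfl⟩ := hy
  obtain ⟨vv, hvv, heq⟩ := S.concat hu hw x ht₁ ht₂
  exact ⟨vv, hvv, t₁ + t₂, by linarith, heq⟩

lemma closure_reach_mono (S : CAS d m) {x y : Fin d → ℝ} (hy : y ∈ closure (S.reach x)) :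
    closure (S.reach y) ⊆ closure (S.reach x) := by
  apply closure_minimal _ isClosed_closure
  rintro z ⟨w, hw, t, ht, rfl⟩
  rw [Metric.mem_closure_iff]
  intro ε hε
  have hexp : (0:ℝ) < Real.exp (S.LL * t) := Real.exp_pos _
  obtain ⟨p, hp, hdist⟩ := Metric.mem_closure_iff.1 hy (ε / Real.exp (S.LL * t)) (by positivity)
  refine ⟨S.φ p w t, S.reach_mono hp ⟨w, hw, t, ht, rfl⟩, ?_⟩
  have hcd := S.contdep hw y p ht
  rw [dist_eq_norm]
  calc ‖S.φ y w t - S.φ p w t‖ ≤ ‖y - p‖ * Real.exp (S.LL * t) := hcd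
    _ < ε := by
        rw [dist_eq_norm] at hdist
        exact (lt_div_iff₀ hexp).1 hdist

lemma exists_inv_control_set (S : CAS d m) (hc : S.ctrl.Nonempty) {K₀ : Set (Fin d → ℝ)}
    (hne : K₀.Nonempty) (hcomp : IsCompact K₀)
    (hinv : ∀ y ∈ K₀, closure (S.reach y) ⊆ K₀) :
    ∃ C, S.isInvControlSet C ∧ C ⊆ K₀ := by
  obtain ⟨v₀, hv₀⟩ := hc
  set 𝒮 : Set (Set (Fin d → ℝ)) :=
    {K | K ⊆ K₀ ∧ K.Nonempty ∧ IsClosed K ∧ ∀ y ∈ K, closure (S.reach y) ⊆ K} with h𝒮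
  have hK₀𝒮 : K₀ ∈ 𝒮 := ⟨Subset.rfl, hne, hcomp.isClosed, hinv⟩
  have hzorn := zorn_superset_nonempty 𝒮 ?_ K₀ hK₀𝒮
  · obtain ⟨K, -, hKmin⟩ := hzorn
    obtain ⟨hKK₀, hKne, hKcl, hKinv⟩ := hKmin.prop
    have hself : ∀ y : Fin d → ℝ, y ∈ S.reach y :=
      fun y => ⟨v₀, hv₀, 0, le_refl 0, S.φ_init y v₀⟩
    have hkey : ∀ y ∈ K, closure (S.reach y) = K := by
      intro y hy
      have hmem : closure (S.reach y) ∈ 𝒮 :=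
        ⟨(hKinv y hy).trans hKK₀, ⟨y, subset_closure (hself y)⟩, isClosed_closure,
          fun z hz => S.closure_reach_mono hz⟩
      exact subset_antisymm (hKinv y hy) (hKmin.2 hmem (hKinv y hy))
    refine ⟨K, ⟨⟨hKne, ⟨?_, ?_⟩, ?_⟩, ?_⟩, hKK₀⟩
    · intro y hy
      exact ⟨v₀, hv₀, fun t ht => (hkey y hy) ▸ subset_closure ⟨v₀, hv₀, t, ht, rfl⟩⟩
    · intro y hy
      exact (hkey y hy).symm.subset
    · intro D' hKD' hD'
      obtain ⟨y, hy⟩ := hKne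
      exact subset_antisymm ((hD'.2 y (hKD' hy)).trans (hkey y hy).subset) hKD'
    · intro y hy
      rw [hKcl.closure_eq]
      exact (hkey y hy).symm
  · intro c hc𝒮 hchain hcne
    refine ⟨⋂₀ c, ⟨?_, ?_, ?_, ?_⟩, fun s hs => sInter_subset_of_mem hs⟩
    · obtain ⟨K, hK⟩ := hcne
      exact (sInter_subset_of_mem hK).trans (hc𝒮 hK).1
    · haveI : Nonempty c := hcne.to_subtype
      apply IsCompact.nonempty_sInter_of_directed_nonempty_isCompact_isClosed
      · intro a ha b hb
        rcases eq_or_ne a b with rfl | hne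
        · exact ⟨a, ha, Subset.rfl, Subset.rfl⟩
        · rcases hchain ha hb hne with h | h
          · exact ⟨a, ha, Subset.rfl, h⟩
          · exact ⟨b, hb, h, Subset.rfl⟩
      · exact fun U hU => (hc𝒮 hU).2.1
      · exact fun U hU => hcomp.of_isClosed_subset (hc𝒮 hU).2.2.1 (hc𝒮 hU).1
      · exact fun U hU => (hc𝒮 hU).2.2.1
    · exact isClosed_sInter fun U hU => (hc𝒮 hU).2.2.1
    · intro y hy
      exact subset_sInter fun U hU => (hc𝒮 hU).2.2.2 y (hy U hU)

lemma closure_reach_subset_M (S : CAS d m) {M : Set (Fin d → ℝ)} (hMc : IsCompact M)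
    (hM : S.posInv M) {x : Fin d → ℝ} (hx : x ∈ M) : closure (S.reach x) ⊆ M := by
  apply closure_minimal _ hMc.isClosed
  rintro z ⟨v, hv, t, ht, rfl⟩
  exact hM x hx v hv t ht

lemma closure_inv (S : CAS d m) {C : Set (Fin d → ℝ)} (hC : S.isInvControlSet C) :
    ∀ z ∈ closure C, closure (S.reach z) ⊆ closure C := by
  obtain ⟨c0, hc0⟩ := hC.1.1
  intro z hz
  have h1 : z ∈ closure (S.reach c0) := (hC.2 c0 hc0) ▸ hz
  have h2 := S.closure_reach_mono h1
  rwa [← hC.2 c0 hc0] at h2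

lemma star (S : CAS d m) {M : Set (Fin d → ℝ)} (hMc : IsCompact M)
    (hacc : S.locAccOn M)
    {C : Set (Fin d → ℝ)} (hC : S.isInvControlSet C) (hCM : C ⊆ M)
    {K : Set (Fin d → ℝ)} (hK : S.isInvControlSet K) (hKC : K ⊆ closure C) : K = C := by
  obtain ⟨k, hk⟩ := hK.1.1
  have hclC_M : closure C ⊆ M := closure_minimal hCM hMc.isClosed
  have hkM : k ∈ M := hclC_M (hKC hk)
  obtain ⟨q, hq, -⟩ := (hacc k hkM 1 one_pos univ Filter.univ_mem).1
  have hKk : closure K = closure (S.reach k) := hK.2 k hk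
  have hKCc : closure K ⊆ closure C := by
    calc closure K ⊆ closure (closure C) := closure_mono hKC
      _ = closure C := closure_closure
  have hreachk : S.reach k ⊆ closure C := fun z hz => hKCc (hKk ▸ subset_closure hz)
  have hsub1 : interior (S.reachLe 1 k) ⊆ closure C :=
    interior_subset.trans ((S.reachLe_subset_reach 1 k).trans hreachk)
  have hqC : (interior (S.reachLe 1 k) ∩ C).Nonempty :=
    _root_.mem_closure_iff.1 (hsub1 hq) _ isOpen_interior hq
  obtain ⟨z, hz_int, hzC⟩ := hqC
  have hz_reach : z ∈ S.reach k := S.reachLe_subset_reach 1 k (interior_subset hz_int)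
  have hCK : closure C ⊆ closure K := by
    rw [hC.2 z hzC, hKk]
    exact closure_mono (S.reach_mono hz_reach)
  have hKCeq : closure K = closure C := subset_antisymm hKCc hCK
  have hprops : S.controlSetProps (C ∪ K) := by
    constructor
    · rintro y (hy | hy)
      · obtain ⟨v, hv, hvy⟩ := hC.1.2.1.1 y hy
        exact ⟨v, hv, fun t ht => Or.inl (hvy t ht)⟩
      · obtain ⟨v, hv, hvy⟩ := hK.1.2.1.1 y hy
        exact ⟨v, hv, fun t ht => Or.inr (hvy t ht)⟩
    · rintro y (hy | hy)
      · rw [← hC.2 y hy]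
        exact union_subset subset_closure hKC
      · rw [← hK.2 y hy, hKCeq]
        exact union_subset subset_closure hKC
  have h1 : C ∪ K = C := hC.1.2.2 _ subset_union_left hprops
  have h2 : C ∪ K = K := hK.1.2.2 _ subset_union_right hprops
  rw [← h2, h1]

lemma crux (S : CAS d m) {M : Set (Fin d → ℝ)} (hMc : IsCompact M) (hM : S.posInv M)
    (hacc : S.locAccOn M) (hc : S.ctrl.Nonempty)
    {C : Set (Fin d → ℝ)} (hC : S.isInvControlSet C) (hCM : C ⊆ M) :
    ∀ y ∈ closure C, closure C ⊆ closure (S.reach y) := by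
  intro y hy
  have hclC_M : closure C ⊆ M := closure_minimal hCM hMc.isClosed
  have hyM : y ∈ M := hclC_M hy
  have hsub : closure (S.reach y) ⊆ closure C := S.closure_inv hC y hy
  obtain ⟨K, hK, hKsub⟩ := S.exists_inv_control_set hc
    ⟨y, subset_closure (S.mem_reach_self hc y)⟩
    (hMc.of_isClosed_subset isClosed_closure (S.closure_reach_subset_M hMc hM hyM))
    (fun z hz => S.closure_reach_mono hz)
  have hKC : K = C := S.star hMc hacc hC hCM hK (hKsub.trans hsub)
  have hCsub : C ⊆ closure (S.reach y) := hKC ▸ hKsub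
  exact closure_minimal hCsub isClosed_closure

lemma invCS_closed (S : CAS d m) {M : Set (Fin d → ℝ)} (hMc : IsCompact M) (hM : S.posInv M)
    (hacc : S.locAccOn M) (hc : S.ctrl.Nonempty)
    {C : Set (Fin d → ℝ)} (hC : S.isInvControlSet C) (hCM : C ⊆ M) :
    closure C = C := by
  apply hC.1.2.2 (closure C) subset_closure
  constructor
  · intro y hy
    obtain ⟨v₀, hv₀⟩ := hc
    refine ⟨v₀, hv₀, fun t ht => ?_⟩
    exact S.closure_inv hC y hy (subset_closure ⟨v₀, hv₀, t, ht, rfl⟩)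
  · intro y hy
    exact S.crux hMc hM hacc hc hC hCM y hy

lemma attr_open (S : CAS d m) {M : Set (Fin d → ℝ)} (hMc : IsCompact M) (hM : S.posInv M)
    (hacc : S.locAccOn M) (hc : S.ctrl.Nonempty)
    {C : Set (Fin d → ℝ)} (hC : S.isInvControlSet C) (hCM : C ⊆ M)
    {x₀ : Fin d → ℝ} (hx₀ : (closure (S.reach x₀) ∩ C).Nonempty) :
    ∃ ε > 0, ∀ x', dist x' x₀ < ε → (closure (S.reach x') ∩ C).Nonempty := by
  have hcl : closure C = C := S.invCS_closed hMc hM hacc hc hC hCM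
  obtain ⟨c, hc_cl, hcC⟩ := hx₀
  have hcM : c ∈ M := hCM hcC
  obtain ⟨q, hq, -⟩ := (hacc c hcM 1 one_pos univ Filter.univ_mem).1
  have hOopen : IsOpen (interior (S.reachLe 1 c)) := isOpen_interior
  have hOsubC : interior (S.reachLe 1 c) ⊆ C := by
    rw [← hcl]
    refine interior_subset.trans ((S.reachLe_subset_reach 1 c).trans ?_)
    intro z hz
    have hz' : z ∈ closure (S.reach c) := subset_closure hz
    rwa [← hC.2 c hcC] at hz'
  have hqcl : q ∈ closure (S.reach c) := by
    rw [← hC.2 c hcC]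
    exact subset_closure (hcl ▸ (hOsubC hq))
  obtain ⟨r, hrO, hr_reach⟩ := _root_.mem_closure_iff.1 hqcl _ hOopen hq
  obtain ⟨v, hv, t, ht, rfl⟩ := hr_reach
  obtain ⟨δ, hδ, hball⟩ := Metric.isOpen_iff.1 hOopen _ hrO
  have hexp : (0:ℝ) < Real.exp (S.LL * t) := Real.exp_pos _
  obtain ⟨p, hp_reach, hpc⟩ :=
    Metric.mem_closure_iff.1 hc_cl (δ / Real.exp (S.LL * t)) (by positivity)
  have hp' : S.φ p v t ∈ interior (S.reachLe 1 c) := by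
    apply hball
    rw [Metric.mem_ball, dist_eq_norm]
    calc ‖S.φ p v t - S.φ c v t‖ ≤ ‖p - c‖ * Real.exp (S.LL * t) := S.contdep hv p c ht
      _ < δ := by
          rw [dist_comm, dist_eq_norm] at hpc
          exact (lt_div_iff₀ hexp).1 hpc
  have hp'_reach : S.φ p v t ∈ S.reach x₀ := S.reach_mono hp_reach ⟨v, hv, t, ht, rfl⟩
  obtain ⟨δ₂, hδ₂, hball₂⟩ := Metric.isOpen_iff.1 hOopen _ hp'
  obtain ⟨w, hw, τ, hτ, hEq⟩ := hp'_reach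
  have hexp₂ : (0:ℝ) < Real.exp (S.LL * τ) := Real.exp_pos _
  refine ⟨δ₂ / Real.exp (S.LL * τ), by positivity, fun x' hx' => ?_⟩
  refine ⟨S.φ x' w τ, subset_closure ⟨w, hw, τ, hτ, rfl⟩, hOsubC (hball₂ ?_)⟩
  rw [Metric.mem_ball, dist_eq_norm]
  have : S.φ x' w τ - S.φ p v t = S.φ x' w τ - S.φ x₀ w τ := by rw [← hEq]
  rw [this]
  calc ‖S.φ x' w τ - S.φ x₀ w τ‖ ≤ ‖x' - x₀‖ * Real.exp (S.LL * τ) := S.contdep hw x' x₀ hτ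
    _ < δ₂ := by
        rw [dist_eq_norm] at hx'
        exact (lt_div_iff₀ hexp₂).1 hx'

end CAS

/-- If `M` is a compact, connected, positively invariant, locally
accessible set containing at least two invariant control sets, then for every
invariant control set `C_k ⊆ M` the set `(𝒜(C_k) ∩ M) \ 𝒜_strict(C_k)` is nonempty;
hence there is another invariant control set `C_i ≠ C_k` with
`𝒜(C_k) ∩ 𝒜(C_i) ≠ ∅`. -/
theorem stmt14 {d m : ℕ} (S : CAS d m) (M : Set (Fin d → ℝ))
    (hMc : IsCompact M) (hMconn : IsConnected M) (hM : S.posInv M)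
    (hacc : S.locAccOn M)
    (htwo : ∃ C₁ C₂, S.isInvControlSet C₁ ∧ C₁ ⊆ M ∧
      S.isInvControlSet C₂ ∧ C₂ ⊆ M ∧ C₁ ≠ C₂) :
    ∀ Ck, S.isInvControlSet Ck → Ck ⊆ M →
      ((S.domAttr Ck ∩ M) \ S.domAttrStrict Ck).Nonempty ∧
      ∃ Ci, S.isInvControlSet Ci ∧ Ci ⊆ M ∧ Ci ≠ Ck ∧
        (S.domAttr Ck ∩ S.domAttr Ci).Nonempty := by
  intro Ck hCk hCkM
  obtain ⟨C₁, C₂, h₁, h₁M, h₂, h₂M, hne12⟩ := htwo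
  have hc : S.ctrl.Nonempty := by
    obtain ⟨x₁, hx₁⟩ := h₁.1.1
    obtain ⟨v, hv, -⟩ := h₁.1.2.1.1 x₁ hx₁
    exact ⟨v, hv⟩
  obtain ⟨C', hC', hC'M, hC'ne⟩ : ∃ C', S.isInvControlSet C' ∧ C' ⊆ M ∧ C' ≠ Ck := by
    by_cases h : C₁ = Ck
    · exact ⟨C₂, h₂, h₂M, fun hh => hne12 (h.trans hh.symm)⟩
    · exact ⟨C₁, h₁, h₁M, h⟩
  set A := S.domAttr Ck with hA
  set B := {x | ∃ C'', S.isInvControlSet C'' ∧ C'' ⊆ M ∧ C'' ≠ Ck ∧ x ∈ S.domAttr C''} with hB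
  have hAopen : IsOpen A := by
    rw [Metric.isOpen_iff]
    intro x hx
    obtain ⟨ε, hε, h⟩ := S.attr_open hMc hM hacc hc hCk hCkM hx
    exact ⟨ε, hε, fun y hy => h y (Metric.mem_ball.1 hy)⟩
  have hBopen : IsOpen B := by
    rw [Metric.isOpen_iff]
    rintro x ⟨C'', hC'', hC''M, hC''ne, hx⟩
    obtain ⟨ε, hε, h⟩ := S.attr_open hMc hM hacc hc hC'' hC''M hx
    exact ⟨ε, hε, fun y hy => ⟨C'', hC'', hC''M, hC''ne, h y (Metric.mem_ball.1 hy)⟩⟩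
  have hcover : M ⊆ A ∪ B := by
    intro x hxM
    obtain ⟨C₃, hC₃, hC₃sub⟩ := S.exists_inv_control_set hc
      ⟨x, subset_closure (S.mem_reach_self hc x)⟩
      (hMc.of_isClosed_subset isClosed_closure (S.closure_reach_subset_M hMc hM hxM))
      (fun z hz => S.closure_reach_mono hz)
    obtain ⟨y₃, hy₃⟩ := hC₃.1.1
    have hx₃ : x ∈ S.domAttr C₃ := ⟨y₃, hC₃sub hy₃, hy₃⟩
    by_cases h : C₃ = Ck
    · subst h
      exact Or.inl hx₃
    · exact Or.inr ⟨C₃, hC₃, hC₃sub.trans (S.closure_reach_subset_M hMc hM hxM), h, hx₃⟩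
  have hAne : (M ∩ A).Nonempty := by
    obtain ⟨ck, hck⟩ := hCk.1.1
    exact ⟨ck, hCkM hck, ⟨ck, subset_closure (S.mem_reach_self hc ck), hck⟩⟩
  have hBne : (M ∩ B).Nonempty := by
    obtain ⟨c', hc'⟩ := hC'.1.1
    exact ⟨c', hC'M hc',
      ⟨C', hC', hC'M, hC'ne, ⟨c', subset_closure (S.mem_reach_self hc c'), hc'⟩⟩⟩
  obtain ⟨x, hxM, hxA, hxB⟩ := hMconn.isPreconnected _ _ hAopen hBopen hcover hAne hBne
  obtain ⟨Ci, hCi, hCiM, hCine, hxCi⟩ := hxB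
  constructor
  · refine ⟨x, ⟨hxA, hxM⟩, ?_⟩
    intro hstrict
    exact hCine (hstrict.2 Ci hCi hxCi)
  · exact ⟨Ci, hCi, hCiM, hCine, ⟨x, hxA, hxCi⟩⟩
end
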